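/- For any m ∈ ℝ and σ² ∈ (0, +∞), d_TV( N(m, σ²), N(0, σ²) ) = (2/√(2π)) ∫_0^{|m|/(2σ)} e^{−x²/2} dx, and consequently d_TV( N(m, σ²), N(0, σ²) ) ≤ |m| / (σ √(2π)). -/

import Mathlib

open MeasureTheory ProbabilityTheory Filter Real

/-- The Gaussian distribution on ℝ with mean `m` and variance `v ≥ 0`. -/
noncomputable def gauss (m v : ℝ) : Measure ℝ := gaussianReal m v.toNNReal

/-- Total variation distance between two measures on ℝ:
`d_TV(μ,ν) = sup_{A measurable} |μ(A) − ν(A)|`. -/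
noncomputable def dTV (μ ν : Measure ℝ) : ℝ :=
  ⨆ A : {A : Set ℝ // MeasurableSet A}, |(μ A.1).toReal - (ν A.1).toReal|

instance : Nonempty {A : Set ℝ // MeasurableSet A} := ⟨⟨∅, MeasurableSet.empty⟩⟩

instance gauss_prob (m v : ℝ) : IsProbabilityMeasure (gauss m v) := by
  unfold gauss; infer_instance

lemma dTV_term_le_one (μ ν : Measure ℝ) [IsProbabilityMeasure μ] [IsProbabilityMeasure ν]
    (A : Set ℝ) : |(μ A).toReal - (ν A).toReal| ≤ 1 := by
  have h1 : (μ A).toReal ≤ 1 := by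
    simpa using ENNReal.toReal_mono (by simp) (prob_le_one (μ := μ) (s := A))
  have h2 : (ν A).toReal ≤ 1 := by
    simpa using ENNReal.toReal_mono (by simp) (prob_le_one (μ := ν) (s := A))
  have h3 : 0 ≤ (μ A).toReal := ENNReal.toReal_nonneg
  have h4 : 0 ≤ (ν A).toReal := ENNReal.toReal_nonneg
  rw [abs_sub_le_iff]; constructor <;> linarith

lemma gauss_map_neg (m v : ℝ) : (gauss m v).map (fun x => -x) = gauss (-m) v := by
  have h := gaussianReal_map_const_mul (μ := m) (v := v.toNNReal) (-1)
  have h2 : (⟨(-1 : ℝ)^2, sq_nonneg _⟩ : NNReal) = 1 := by ext; norm_num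
  rw [show ∀ p, NNReal.mk ((-1 : ℝ)^2) p = 1 from fun _ => h2, one_mul] at h
  simpa [gauss, neg_one_mul] using h

lemma dTV_le_neg (a v : ℝ) : dTV (gauss a v) (gauss 0 v) ≤ dTV (gauss (-a) v) (gauss 0 v) := by
  refine ciSup_le fun A => ?_
  have hA := A.2
  have h1 : gauss a v A.1 = gauss (-a) v ((fun x : ℝ => -x) ⁻¹' A.1) := by
    conv_lhs => rw [show gauss a v = (gauss (-a) v).map (fun x => -x) by
      rw [gauss_map_neg, neg_neg]]
    rw [Measure.map_apply measurable_neg hA]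
  have h2 : gauss 0 v A.1 = gauss 0 v ((fun x : ℝ => -x) ⁻¹' A.1) := by
    conv_lhs => rw [show gauss 0 v = (gauss 0 v).map (fun x => -x) by
      rw [gauss_map_neg, neg_zero]]
    rw [Measure.map_apply measurable_neg hA]
  rw [h1, h2]
  refine le_ciSup_of_le ⟨1, ?_⟩ ⟨(fun x : ℝ => -x) ⁻¹' A.1, hA.preimage measurable_neg⟩ le_rfl
  rintro x ⟨B, rfl⟩
  exact dTV_term_le_one _ _ _

lemma gauss_apply_toReal (m v : ℝ) (hv : 0 < v) (s : Set ℝ) :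
    (gauss m v s).toReal = ∫ x in s, gaussianPDFReal m v.toNNReal x := by
  have hV : v.toNNReal ≠ 0 := by
    simp only [ne_eq, Real.toNNReal_eq_zero, not_le]; exact hv
  rw [gauss, gaussianReal_apply_eq_integral m hV s, ENNReal.toReal_ofReal]
  exact integral_nonneg fun x => gaussianPDFReal_nonneg _ _ _

lemma key (m v : ℝ) (hv : 0 < v) (hm : 0 < m) :
    dTV (gauss m v) (gauss 0 v) =
      2 / Real.sqrt (2 * π) *
        ∫ x in (0 : ℝ)..(m / (2 * Real.sqrt v)), Real.exp (-x ^ 2 / 2) := by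
  set V := v.toNNReal with hVdef
  have hVv : (V : ℝ) = v := Real.coe_toNNReal v hv.le
  have hV : V ≠ 0 := by
    simp only [hVdef, ne_eq, Real.toNNReal_eq_zero, not_le]; exact hv
  set f := gaussianPDFReal m V with hfdef
  set g := gaussianPDFReal 0 V with hgdef
  have hf : Integrable f := integrable_gaussianPDFReal m V
  have hg : Integrable g := integrable_gaussianPDFReal 0 V
  have hf1 : ∫ x, f x = 1 := integral_gaussianPDFReal_eq_one m hV
  have hg1 : ∫ x, g x = 1 := integral_gaussianPDFReal_eq_one 0 hV
  have hfg : Integrable (fun x => f x - g x) := hf.sub hg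
  have hgf : Integrable (fun x => g x - f x) := hg.sub hf
  set S : Set ℝ := Set.Ici (m / 2) with hSdef
  have hS : MeasurableSet S := measurableSet_Ici
  have h2v : (0 : ℝ) < 2 * (V : ℝ) := by rw [hVv]; linarith
  have hle_S : ∀ x ∈ S, g x ≤ f x := by
    intro x hx
    have hx' : m / 2 ≤ x := hx
    simp only [hfdef, hgdef, gaussianPDFReal, sub_zero]
    refine mul_le_mul_of_nonneg_left ?_ (inv_nonneg.2 (Real.sqrt_nonneg _))
    refine Real.exp_le_exp.2 (div_le_div_of_nonneg_right ?_ h2v.le)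
    nlinarith
  have hge_Sc : ∀ x ∈ Sᶜ, f x ≤ g x := by
    intro x hx
    have hx' : x < m / 2 := by simpa [hSdef] using hx
    simp only [hfdef, hgdef, gaussianPDFReal, sub_zero]
    refine mul_le_mul_of_nonneg_left ?_ (inv_nonneg.2 (Real.sqrt_nonneg _))
    refine Real.exp_le_exp.2 (div_le_div_of_nonneg_right ?_ h2v.le)
    nlinarith
  set T : ℝ := (∫ x in S, f x) - ∫ x in S, g x with hTdef
  have hTsub : T = ∫ x in S, (f x - g x) :=
    (integral_sub hf.integrableOn hg.integrableOn).symm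
  have hT0 : 0 ≤ T := by
    rw [hTsub]
    exact setIntegral_nonneg hS fun x hx => sub_nonneg.2 (hle_S x hx)
  have hSnn : 0 ≤ᵐ[(volume : Measure ℝ).restrict S] fun x => f x - g x :=
    (ae_restrict_iff' hS).2 (ae_of_all _ fun x hx => sub_nonneg.2 (hle_S x hx))
  have hbound : ∀ A : Set ℝ, MeasurableSet A →
      |(gauss m v A).toReal - (gauss 0 v A).toReal| ≤ T := by
    intro A hA
    rw [gauss_apply_toReal m v hv, gauss_apply_toReal 0 v hv]
    have h1 : ∫ x in A, (f x - g x) ≤ T := by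
      calc ∫ x in A, (f x - g x)
          = (∫ x in A ∩ S, (f x - g x)) + ∫ x in A \ S, (f x - g x) :=
            (integral_inter_add_diff hS hfg.integrableOn).symm
        _ ≤ ∫ x in A ∩ S, (f x - g x) := by
            have hd : ∫ x in A \ S, (f x - g x) ≤ 0 :=
              setIntegral_nonpos (hA.diff hS)
                fun x hx => sub_nonpos.2 (hge_Sc x hx.2)
            linarith
        _ ≤ ∫ x in S, (f x - g x) :=
            setIntegral_mono_set hfg.integrableOn hSnn
              (Set.inter_subset_right).eventuallyLE
        _ = T := hTsub.symm
    have h2 : ∫ x in A, (g x - f x) ≤ T := by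
      have hScnn : 0 ≤ᵐ[(volume : Measure ℝ).restrict Sᶜ] fun x => g x - f x :=
        (ae_restrict_iff' hS.compl).2 (ae_of_all _ fun x hx => sub_nonneg.2 (hge_Sc x hx))
      have hcompl : ∫ x in Sᶜ, (g x - f x) = T := by
        have hadd : (∫ x in S, (g x - f x)) + ∫ x in Sᶜ, (g x - f x) = ∫ x, (g x - f x) :=
          integral_add_compl hS hgf
        have htot : ∫ x, (g x - f x) = 0 := by
          rw [integral_sub hg hf, hg1, hf1]; ring
        have hSint : ∫ x in S, (g x - f x) = -T := by
          rw [integral_sub hg.integrableOn hf.integrableOn, hTdef]; ring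
        rw [hSint, htot] at hadd; linarith
      calc ∫ x in A, (g x - f x)
          = (∫ x in A ∩ Sᶜ, (g x - f x)) + ∫ x in A \ Sᶜ, (g x - f x) :=
            (integral_inter_add_diff hS.compl hgf.integrableOn).symm
        _ ≤ ∫ x in A ∩ Sᶜ, (g x - f x) := by
            have hd : ∫ x in A \ Sᶜ, (g x - f x) ≤ 0 := by
              refine setIntegral_nonpos (hA.diff hS.compl)
                fun x hx => sub_nonpos.2 (hle_S x ?_)
              have := hx.2; simpa using this
            linarith
        _ ≤ ∫ x in Sᶜ, (g x - f x) :=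
            setIntegral_mono_set hgf.integrableOn hScnn
              (Set.inter_subset_right).eventuallyLE
        _ = T := hcompl
    have hab : (∫ x in A, f x) - ∫ x in A, g x = ∫ x in A, (f x - g x) :=
      (integral_sub hf.integrableOn hg.integrableOn).symm
    have hba : (∫ x in A, g x) - ∫ x in A, f x = ∫ x in A, (g x - f x) :=
      (integral_sub hg.integrableOn hf.integrableOn).symm
    rw [abs_sub_le_iff]
    constructor
    · rw [hab]; exact h1
    · rw [hba]; exact h2
  have hdtv : dTV (gauss m v) (gauss 0 v) = T := by
    refine le_antisymm (ciSup_le fun A => hbound A.1 A.2) ?_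
    have hTval : |(gauss m v S).toReal - (gauss 0 v S).toReal| = T := by
      rw [gauss_apply_toReal m v hv, gauss_apply_toReal 0 v hv, ← hTdef, abs_of_nonneg hT0]
    rw [← hTval]
    refine le_ciSup (f := fun A : {A : Set ℝ // MeasurableSet A} =>
      |(gauss m v A.1).toReal - (gauss 0 v A.1).toReal|) ⟨T, ?_⟩ ⟨S, hS⟩
    rintro x ⟨B, rfl⟩
    exact hbound B.1 B.2
  rw [hdtv]
  -- now compute T
  set σ : ℝ := Real.sqrt v with hσdef
  have hσ : 0 < σ := Real.sqrt_pos.2 hv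
  have hσ2 : σ ^ 2 = v := Real.sq_sqrt hv.le
  -- translation: ∫ x in Iio c, f x = ∫ x in Iio (c - m), g x
  have hshift : ∀ c : ℝ, ∫ x in Set.Iio c, f x = ∫ x in Set.Iio (c - m), g x := by
    intro c
    have hmap : (volume : Measure ℝ).map (fun x => x - m) = volume := by
      simp_rw [sub_eq_add_neg]
      exact map_add_right_eq_self volume (-m)
    have hpre : (fun x : ℝ => x - m) ⁻¹' Set.Iio (c - m) = Set.Iio c := by
      ext x; simp [sub_lt_sub_iff_right]
    calc ∫ x in Set.Iio c, f x
        = ∫ x in (fun x : ℝ => x - m) ⁻¹' Set.Iio (c - m), g (x - m) := by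
          rw [hpre]
          refine setIntegral_congr_fun measurableSet_Iio fun x _ => ?_
          rw [hgdef, gaussianPDFReal_sub, zero_add]
      _ = ∫ x in Set.Iio (c - m), g x := by
          refine (setIntegral_map measurableSet_Iio ?_
            (measurable_id'.sub_const m).aemeasurable).symm.trans ?_
          · rw [hmap]; exact hg.1
          · rw [hmap]
  have hIic : ∀ c : ℝ, ∫ x in Set.Ici c, f x = 1 - ∫ x in Set.Iio c, f x := by
    intro c
    have := integral_add_compl (measurableSet_Iio (a := c)) hf
    rw [Set.compl_Iio] at this
    rw [hf1] at this; linarith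
  have hIicg : ∀ c : ℝ, ∫ x in Set.Ici c, g x = 1 - ∫ x in Set.Iio c, g x := by
    intro c
    have := integral_add_compl (measurableSet_Iio (a := c)) hg
    rw [Set.compl_Iio] at this
    rw [hg1] at this; linarith
  have hT1 : T = (∫ x in Set.Iio (m / 2), g x) - ∫ x in Set.Iio (-(m / 2)), g x := by
    rw [hTdef, hIic, hIicg, hshift]
    have : m / 2 - m = -(m / 2) := by ring
    rw [this]; ring
  have hT2 : T = ∫ x in (-(m / 2))..(m / 2), g x := by
    rw [hT1, ← integral_Iic_eq_integral_Iio, ← integral_Iic_eq_integral_Iio,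
      intervalIntegral.integral_Iic_sub_Iic hg.integrableOn hg.integrableOn]
  have geven : ∀ x : ℝ, g (-x) = g x := by
    intro x; simp [hgdef, gaussianPDFReal, neg_sq]
  have hT3 : T = 2 * ∫ x in (0 : ℝ)..(m / 2), g x := by
    rw [hT2, ← intervalIntegral.integral_add_adjacent_intervals
      (a := -(m / 2)) (b := 0) (c := m / 2) hg.intervalIntegrable hg.intervalIntegrable]
    have : ∫ x in (-(m / 2))..(0 : ℝ), g x = ∫ x in (0 : ℝ)..(m / 2), g x := by
      rw [show (0 : ℝ) = -0 by ring, ← intervalIntegral.integral_comp_neg]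
      simp_rw [geven]
      norm_num
    rw [this]; ring
  have hsub : ∫ x in (0 : ℝ)..(m / 2), g x
      = σ * ∫ x in (0 : ℝ)..(m / (2 * σ)), g (σ * x) := by
    have := intervalIntegral.smul_integral_comp_mul_left (a := (0 : ℝ))
      (b := m / (2 * σ)) (fun x => g x) σ
    rw [mul_zero, show σ * (m / (2 * σ)) = m / 2 by field_simp] at this
    rw [← this, smul_eq_mul]
  have hgσ : ∀ x : ℝ, g (σ * x) = (Real.sqrt (2 * π * v))⁻¹ * Real.exp (-x ^ 2 / 2) := by
    intro x
    simp only [hgdef, gaussianPDFReal, sub_zero, hVv]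
    congr 1
    rw [mul_pow, hσ2]
    congr 1
    field_simp
  have hcoef : σ * (Real.sqrt (2 * π * v))⁻¹ = (Real.sqrt (2 * π))⁻¹ := by
    rw [Real.sqrt_mul (by positivity) v, ← hσdef]
    field_simp
  calc T = 2 * (σ * ((Real.sqrt (2 * π * v))⁻¹ *
        ∫ x in (0 : ℝ)..(m / (2 * σ)), Real.exp (-x ^ 2 / 2))) := by
        rw [hT3, hsub]
        simp_rw [hgσ]
        rw [intervalIntegral.integral_const_mul]
    _ = 2 / Real.sqrt (2 * π) *
        ∫ x in (0 : ℝ)..(m / (2 * σ)), Real.exp (-x ^ 2 / 2) := by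
        have h2 : (2 : ℝ) / Real.sqrt (2 * π) = 2 * (σ * (Real.sqrt (2 * π * v))⁻¹) := by
          rw [hcoef, div_eq_mul_inv]
        rw [h2]
        ring

theorem tv_gaussian_mean_formula (m v : ℝ) (hv : 0 < v) :
    (dTV (gauss m v) (gauss 0 v) =
      2 / Real.sqrt (2 * π) *
        ∫ x in (0 : ℝ)..(|m| / (2 * Real.sqrt v)), Real.exp (-x ^ 2 / 2)) ∧
    dTV (gauss m v) (gauss 0 v) ≤ |m| / (Real.sqrt v * Real.sqrt (2 * π)) := by
  have heq : dTV (gauss m v) (gauss 0 v) =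
      2 / Real.sqrt (2 * π) *
        ∫ x in (0 : ℝ)..(|m| / (2 * Real.sqrt v)), Real.exp (-x ^ 2 / 2) := by
    rcases lt_trichotomy m 0 with hm | hm | hm
    · have hsymm : dTV (gauss m v) (gauss 0 v) = dTV (gauss (-m) v) (gauss 0 v) := by
        refine le_antisymm (dTV_le_neg m v) ?_
        have := dTV_le_neg (-m) v
        rwa [neg_neg] at this
      rw [hsymm, abs_of_neg hm]
      exact key (-m) v hv (by linarith)
    · subst hm
      simp only [abs_zero, zero_div, intervalIntegral.integral_same, mul_zero]
      simp only [dTV, sub_self, abs_zero]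
      exact ciSup_const
    · rw [abs_of_pos hm]
      exact key m v hv hm
  refine ⟨heq, ?_⟩
  rw [heq]
  set c : ℝ := |m| / (2 * Real.sqrt v) with hcdef
  have hc0 : 0 ≤ c := by positivity
  have hint : ∫ x in (0 : ℝ)..c, Real.exp (-x ^ 2 / 2) ≤ c := by
    have h1 : ∫ x in (0 : ℝ)..c, Real.exp (-x ^ 2 / 2) ≤ ∫ x in (0 : ℝ)..c, (1 : ℝ) := by
      refine intervalIntegral.integral_mono_on hc0 ?_ intervalIntegrable_const fun x hx => ?_
      · exact (Continuous.intervalIntegrable (by continuity) _ _)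
      · exact Real.exp_le_one_iff.2 (by nlinarith [sq_nonneg x])
    simpa using h1
  have hπ : 0 < Real.sqrt (2 * π) := Real.sqrt_pos.2 (by positivity)
  have hsv : 0 < Real.sqrt v := Real.sqrt_pos.2 hv
  calc 2 / Real.sqrt (2 * π) * ∫ x in (0 : ℝ)..c, Real.exp (-x ^ 2 / 2)
      ≤ 2 / Real.sqrt (2 * π) * c := by
        exact mul_le_mul_of_nonneg_left hint (by positivity)
    _ = |m| / (Real.sqrt v * Real.sqrt (2 * π)) := by
        rw [hcdef]; field_simp
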